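/- Let (X,d_X) be a geodesic metric space and let δ, ε, R > 0. Suppose F : ℍⁿ → X (exponential model ℝ^{n-1} × ℝ) satisfies: (1) t ↦ F(x,t) is a geodesic for all x ∈ ℝ^{n-1}; (2) for distinct x, x', the geodesics F∘η_x and F∘η_{x'} are two sides of an ideal δ-slim triangle in X; (3) if e^{-t}|x - x'| < ε then d_X(F(x,t),F(x',t)) ≤ R; (4) whenever e^{-t_k}|x_k - x_k'| → ∞, then d_X(F(x_k,t_k),F(x_k',t_k)) → ∞. Then there exists K ≥ 0 such that F is a K-almost-isometric embedding. -/

import Mathlib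

open Filter

/-- The inverse hyperbolic cosine. -/
noncomputable def arcosh (x : ℝ) : ℝ := Real.log (x + Real.sqrt (x ^ 2 - 1))

/-- Hyperbolic distance in the exponential model `ℝ^{n-1} × ℝ` with metric
`ds² = e^{-2t}|dx|² + dt²` (closed formula). -/
noncomputable def hypDist {m : ℕ} (p q : EuclideanSpace ℝ (Fin m) × ℝ) : ℝ :=
  arcosh (1 + (dist p.1 q.1 ^ 2 + (Real.exp p.2 - Real.exp q.2) ^ 2) /
    (2 * Real.exp p.2 * Real.exp q.2))

lemma log_le_arcosh {y : ℝ} (hy : 1 ≤ y) : Real.log y ≤ arcosh y := by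
  unfold arcosh
  apply Real.log_le_log (by linarith)
  nlinarith [Real.sqrt_nonneg (y^2-1)]

lemma arcosh_le_log {y : ℝ} (hy : 1 ≤ y) : arcosh y ≤ Real.log 2 + Real.log y := by
  unfold arcosh
  rw [← Real.log_mul (by norm_num) (by linarith)]
  apply Real.log_le_log (by positivity)
  have h := Real.sqrt_le_sqrt (show y^2 - 1 ≤ y^2 by linarith)
  rw [Real.sqrt_sq (by linarith)] at h
  linarith

lemma arcosh_cosh (r : ℝ) : arcosh (Real.cosh r) = |r| := by
  unfold arcosh
  have h1 : Real.cosh r ^ 2 - 1 = Real.sinh r ^ 2 := by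
    have := Real.cosh_sq r; linarith
  rw [h1, Real.sqrt_sq_eq_abs]
  have h2 : Real.cosh r + |Real.sinh r| = Real.exp |r| := by
    rcases le_or_gt 0 r with h | h
    · rw [abs_of_nonneg (Real.sinh_nonneg_iff.mpr h), abs_of_nonneg h, Real.cosh_add_sinh]
    · rw [abs_of_neg (Real.sinh_neg_iff.mpr h), abs_of_neg h, ← Real.cosh_neg,
        ← Real.sinh_neg, Real.cosh_add_sinh]
  rw [h2, Real.log_exp]

lemma cosh_arg_eq (a s t : ℝ) :
    1 + (a ^ 2 + (Real.exp s - Real.exp t) ^ 2) / (2 * Real.exp s * Real.exp t)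
      = Real.cosh (s - t) + a ^ 2 / (2 * Real.exp s * Real.exp t) := by
  have hs := Real.exp_pos s
  have ht := Real.exp_pos t
  rw [Real.cosh_eq, Real.exp_sub, neg_sub, Real.exp_sub]
  field_simp
  ring

lemma dichotomy {δ d₀ sb B A B' A' : ℝ} (hδ : 0 < δ) (hs : 7*δ ≤ sb)
    (h1 : sb - 4*δ ≤ |B - A|) (h2 : |B - A| ≤ sb + 4*δ)
    (h1' : sb - 4*δ ≤ |B' - A'|) (h2' : |B' - A'| ≤ sb + 4*δ)
    (h3 : |A - A'| ≤ d₀) :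
    2*sb - 8*δ - d₀ ≤ |B - B'| ∨ |B - B'| ≤ d₀ + 8*δ := by
  obtain ⟨h3a, h3b⟩ := abs_le.mp h3
  rcases le_abs.mp h1 with hu | hu <;> rcases le_abs.mp h1' with hv | hv
  · right
    rcases abs_cases (B - A) with ⟨e, _⟩ | ⟨e, _⟩ <;>
      rcases abs_cases (B' - A') with ⟨e', _⟩ | ⟨e', _⟩ <;>
      rcases abs_cases (B - B') with ⟨f, _⟩ | ⟨f, _⟩ <;> linarith
  · left
    rcases abs_cases (B - A) with ⟨e, _⟩ | ⟨e, _⟩ <;>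
      rcases abs_cases (B' - A') with ⟨e', _⟩ | ⟨e', _⟩ <;>
      rcases abs_cases (B - B') with ⟨f, _⟩ | ⟨f, _⟩ <;> linarith
  · left
    rcases abs_cases (B - A) with ⟨e, _⟩ | ⟨e, _⟩ <;>
      rcases abs_cases (B' - A') with ⟨e', _⟩ | ⟨e', _⟩ <;>
      rcases abs_cases (B - B') with ⟨f, _⟩ | ⟨f, _⟩ <;> linarith
  · right
    rcases abs_cases (B - A) with ⟨e, _⟩ | ⟨e, _⟩ <;>
      rcases abs_cases (B' - A') with ⟨e', _⟩ | ⟨e', _⟩ <;>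
      rcases abs_cases (B - B') with ⟨f, _⟩ | ⟨f, _⟩ <;> linarith

/-- the criteria lemma: a map `F : ℍⁿ → X` (exponential model) to a
geodesic metric space sending vertical lines to geodesics, with any two such image
geodesics two sides of an ideal `δ`-slim triangle, with a uniform bound `R` on images
of horizontally `ε`-close points, and proper on horizontal scales, is a
`K`-almost-isometric embedding for some `K`. -/
theorem criteria_lemma {X : Type*} [MetricSpace X] {m : ℕ}
    (hgeo : ∀ a b : X, ∃ γ : ℝ → X, γ 0 = a ∧ γ (dist a b) = b ∧
      ∀ s ∈ Set.Icc (0 : ℝ) (dist a b), ∀ u ∈ Set.Icc (0 : ℝ) (dist a b),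
        dist (γ s) (γ u) = |s - u|)
    (δ ε R : ℝ) (hδ : 0 < δ) (hε : 0 < ε) (hR : 0 < R)
    (F : EuclideanSpace ℝ (Fin m) × ℝ → X)
    -- (1) each vertical line maps to a geodesic
    (h1 : ∀ (x : EuclideanSpace ℝ (Fin m)) (s t : ℝ),
      dist (F (x, s)) (F (x, t)) = |s - t|)
    -- (2) two sides of an ideal δ-slim triangle
    (h2 : ∀ x x' : EuclideanSpace ℝ (Fin m), x ≠ x' → ∃ Rside : ℝ → X,
      (∀ s t : ℝ, dist (Rside s) (Rside t) = |s - t|) ∧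
      (∀ s : ℝ, Metric.infDist (F (x, s))
        (Set.range (fun u => F (x', u)) ∪ Set.range Rside) ≤ δ) ∧
      (∀ s : ℝ, Metric.infDist (F (x', s))
        (Set.range (fun u => F (x, u)) ∪ Set.range Rside) ≤ δ) ∧
      (∀ s : ℝ, Metric.infDist (Rside s)
        (Set.range (fun u => F (x, u)) ∪ Set.range (fun u => F (x', u))) ≤ δ))
    -- (3) uniform bound at small scaled horizontal distance
    (h3 : ∀ (x x' : EuclideanSpace ℝ (Fin m)) (t : ℝ),
      Real.exp (-t) * dist x x' < ε → dist (F (x, t)) (F (x', t)) ≤ R)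
    -- (4) properness along horizontal scales
    (h4 : ∀ (x x' : ℕ → EuclideanSpace ℝ (Fin m)) (t : ℕ → ℝ),
      Tendsto (fun k => Real.exp (-(t k)) * dist (x k) (x' k)) atTop atTop →
      Tendsto (fun k => dist (F (x k, t k)) (F (x' k, t k))) atTop atTop) :
    ∃ K : ℝ, ∀ p q : EuclideanSpace ℝ (Fin m) × ℝ,
      |hypDist p q - dist (F p) (F q)| ≤ K := by
  -- extraction of uniform properness thresholds from h4
  have hprop : ∀ N : ℝ, ∃ L : ℝ, ∀ (x x' : EuclideanSpace ℝ (Fin m)) (t : ℝ),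
      L ≤ Real.exp (-t) * dist x x' → N ≤ dist (F (x, t)) (F (x', t)) := by
    intro N
    by_contra h
    push_neg at h
    choose xs xs' ts hL hN using fun k : ℕ => h k
    have h1' : Tendsto (fun k : ℕ => Real.exp (-(ts k)) * dist (xs k) (xs' k)) atTop atTop :=
      tendsto_atTop_mono hL tendsto_natCast_atTop_atTop
    obtain ⟨k, hk⟩ := ((h4 xs xs' ts h1').eventually_ge_atTop N).exists
    exact absurd hk (not_le.mpr (hN k))
  have hc : ∀ N : ℝ, ∃ c : ℝ, 0 ≤ c ∧ ∀ (x x' : EuclideanSpace ℝ (Fin m)) (t : ℝ),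
      0 < dist x x' → t ≤ Real.log (dist x x' / ε) - c →
      N ≤ dist (F (x, t)) (F (x', t)) := by
    intro N
    obtain ⟨L, hL⟩ := hprop N
    refine ⟨Real.log (max L ε / ε),
      Real.log_nonneg ((le_div_iff₀ hε).mpr (by simpa using le_max_right L ε)), ?_⟩
    intro x x' t ha ht
    apply hL
    have hT : Real.exp (Real.log (dist x x' / ε)) = dist x x' / ε :=
      Real.exp_log (div_pos ha hε)
    have h5 : Real.exp (Real.log (max L ε / ε)) = max L ε / ε :=
      Real.exp_log (div_pos (lt_of_lt_of_le hε (le_max_right L ε)) hε)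
    have h6 : Real.log (max L ε / ε) ≤ Real.log (dist x x' / ε) - t := by linarith
    have h7 := Real.exp_le_exp.mpr h6
    rw [h5, Real.exp_sub, hT] at h7
    have h8 : max L ε ≤ ε * (dist x x' / ε / Real.exp t) := by
      rw [div_le_iff₀ hε] at h7; linarith [h7]
    calc L ≤ max L ε := le_max_left _ _
      _ ≤ ε * (dist x x' / ε / Real.exp t) := h8
      _ = Real.exp (-t) * dist x x' := by
          rw [Real.exp_neg]; field_simp
  -- top bound: above the critical height images are (R+2)-close
  have hDtop : ∀ (x x' : EuclideanSpace ℝ (Fin m)) (t : ℝ), 0 < dist x x' →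
      Real.log (dist x x' / ε) ≤ t → dist (F (x, t)) (F (x', t)) ≤ R + 2 := by
    intro x x' t ha ht
    have haT : dist x x' = ε * Real.exp (Real.log (dist x x' / ε)) := by
      rw [Real.exp_log (div_pos ha hε)]; field_simp
    have hb : Real.exp (-(t+1)) * dist x x' < ε := by
      rw [haT, show Real.exp (-(t+1)) * (ε * Real.exp (Real.log (dist x x' / ε)))
          = ε * Real.exp (Real.log (dist x x' / ε) - (t+1)) by
        rw [Real.exp_sub, Real.exp_neg]; field_simp; try ring]
      have h9 : Real.exp (Real.log (dist x x' / ε) - (t+1)) < 1 :=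
        Real.exp_lt_one_iff.mpr (by linarith)
      nlinarith
    have e1 := dist_triangle4 (F (x, t)) (F (x, t+1)) (F (x', t+1)) (F (x', t))
    rw [h1, h1] at e1
    have e2 := h3 x x' (t+1) hb
    have e3 : |t - (t+1)| = 1 := by rw [abs_of_nonpos (by linarith)]; ring
    have e4 : |t + 1 - t| = 1 := by rw [abs_of_nonneg (by linarith)]; ring
    rw [e3, e4] at e1
    linarith
  -- constants
  obtain ⟨c₁', hc₁0, hc₁⟩ := hc (4*δ + R + 3)
  set c₁ := max c₁' (R + 2*δ + 3) with hc₁def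
  have hc₁nn : 0 ≤ c₁ := le_trans hc₁0 (le_max_left _ _)
  set d₀ := 2*c₁ + R + 2 + 4*δ with hd₀def
  obtain ⟨c₃', hc₃0, hc₃⟩ := hc (d₀ + 12*δ + 1)
  set c₃ := max c₃' (c₁ + 7*δ) with hc₃def
  have hc₃nn : 0 ≤ c₃ := le_trans hc₃0 (le_max_left _ _)
  set CK := 2*c₁ + 12*δ + d₀ + 2*c₃ with hCKdef
  have hCKnn : 0 ≤ CK := by
    simp only [hCKdef, hd₀def]; linarith
  -- KEY divergence lower bound
  have key : ∀ (x x' : EuclideanSpace ℝ (Fin m)), x ≠ x' → ∀ t : ℝ,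
      t ≤ Real.log (dist x x' / ε) →
      2*(Real.log (dist x x' / ε) - t) - CK ≤ dist (F (x, t)) (F (x', t)) := by
    intro x x' hxx t htT
    have ha : 0 < dist x x' := dist_pos.mpr hxx
    set T := Real.log (dist x x' / ε) with hTdef
    rcases le_or_gt t (T - c₃) with htc | htc
    swap
    · have := dist_nonneg (x := F (x, t)) (y := F (x', t))
      simp only [hCKdef]
      linarith
    obtain ⟨ρ, hρ, hs1, hs2, hs3⟩ := h2 x x' hxx
    have hc₃b : c₁ + 7*δ ≤ c₃ := le_max_right _ _
    have hc₁a : c₁' ≤ c₁ := le_max_left _ _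
    have hc₁b : R + 2*δ + 3 ≤ c₁ := le_max_right _ _
    have hc₃a : c₃' ≤ c₃ := le_max_left _ _
    -- points of γ below T - c₁ are 2δ-close to ρ
    have hget : ∀ u : ℝ, u ≤ T - c₁ → ∃ g : ℝ, dist (F (x, u)) (ρ g) ≤ 2*δ := by
      intro u hu
      have hne : (Set.range (fun v => F (x', v)) ∪ Set.range ρ).Nonempty :=
        ⟨F (x', 0), Set.mem_union_left _ ⟨0, rfl⟩⟩
      have hinf : Metric.infDist (F (x, u))
          (Set.range (fun v => F (x', v)) ∪ Set.range ρ) < 2*δ :=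
        lt_of_le_of_lt (hs1 u) (by linarith)
      obtain ⟨y, hy, hdy⟩ := (Metric.infDist_lt_iff hne).mp hinf
      rcases hy with hy | hy
      · exfalso
        obtain ⟨u', rfl⟩ := hy
        replace hdy : dist (F (x, u)) (F (x', u')) < 2*δ := hdy
        have hDu : 4*δ + R + 3 ≤ dist (F (x, u)) (F (x', u)) :=
          hc₁ x x' u ha (by linarith)
        rcases le_or_gt T u' with hu' | hu'
        · have e1 := dist_triangle (F (x, u)) (F (x', u')) (F (x, u'))
          have e2 : dist (F (x', u')) (F (x, u')) ≤ R + 2 := by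
            rw [dist_comm]; exact hDtop x x' u' ha hu'
          have e3 : dist (F (x, u)) (F (x, u')) = u' - u := by
            rw [h1, abs_of_nonpos (by linarith)]; ring
          rw [e3] at e1
          linarith
        · have e1 := dist_triangle4 (F (x', u')) (F (x, u)) (F (x, T)) (F (x', T))
          have e2 := dist_triangle4 (F (x, u)) (F (x', u')) (F (x', T)) (F (x, T))
          have e3 : dist (F (x, T)) (F (x', T)) ≤ R + 2 := hDtop x x' T ha le_rfl
          have e3' : dist (F (x', T)) (F (x, T)) ≤ R + 2 := by rw [dist_comm]; exact e3
          have e4 : dist (F (x, u)) (F (x, T)) = T - u := by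
            rw [h1, abs_of_nonpos (by linarith)]; ring
          have e5 : dist (F (x', u')) (F (x', T)) = T - u' := by
            rw [h1, abs_of_nonpos (by linarith)]; ring
          have e6 : dist (F (x', u')) (F (x, u)) = dist (F (x, u)) (F (x', u')) :=
            dist_comm _ _
          rw [e4, e5, e6] at e1
          rw [e5] at e2
          -- e1 : T - u' ≤ d + (T - u) + (R+2), e2 : T - u ≤ d + (T - u') + (R+2)
          have e7 := dist_triangle (F (x, u)) (F (x', u')) (F (x', u))
          have e8 : dist (F (x', u')) (F (x', u)) = |u' - u| := h1 x' u' u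
          rw [e8] at e7
          rcases abs_cases (u' - u) with ⟨e9, _⟩ | ⟨e9, _⟩ <;> linarith
      · obtain ⟨g, rfl⟩ := hy
        exact ⟨g, hdy.le⟩
    -- points of γ' below T - c₁ are 2δ-close to ρ
    have hget' : ∀ u : ℝ, u ≤ T - c₁ → ∃ g : ℝ, dist (F (x', u)) (ρ g) ≤ 2*δ := by
      intro u hu
      have hne : (Set.range (fun v => F (x, v)) ∪ Set.range ρ).Nonempty :=
        ⟨F (x, 0), Set.mem_union_left _ ⟨0, rfl⟩⟩
      have hinf : Metric.infDist (F (x', u))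
          (Set.range (fun v => F (x, v)) ∪ Set.range ρ) < 2*δ :=
        lt_of_le_of_lt (hs2 u) (by linarith)
      obtain ⟨y, hy, hdy⟩ := (Metric.infDist_lt_iff hne).mp hinf
      rcases hy with hy | hy
      · exfalso
        obtain ⟨u', rfl⟩ := hy
        replace hdy : dist (F (x', u)) (F (x, u')) < 2*δ := hdy
        have hDu : 4*δ + R + 3 ≤ dist (F (x, u)) (F (x', u)) :=
          hc₁ x x' u ha (by linarith)
        rcases le_or_gt T u' with hu' | hu'
        · have e1 := dist_triangle (F (x', u)) (F (x, u')) (F (x', u'))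
          have e2 : dist (F (x, u')) (F (x', u')) ≤ R + 2 := hDtop x x' u' ha hu'
          have e3 : dist (F (x', u)) (F (x', u')) = u' - u := by
            rw [h1, abs_of_nonpos (by linarith)]; ring
          rw [e3] at e1
          linarith
        · have e1 := dist_triangle4 (F (x, u')) (F (x', u)) (F (x', T)) (F (x, T))
          have e2 := dist_triangle4 (F (x', u)) (F (x, u')) (F (x, T)) (F (x', T))
          have e3 : dist (F (x, T)) (F (x', T)) ≤ R + 2 := hDtop x x' T ha le_rfl
          have e3' : dist (F (x', T)) (F (x, T)) ≤ R + 2 := by rw [dist_comm]; exact e3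
          have e4 : dist (F (x', u)) (F (x', T)) = T - u := by
            rw [h1, abs_of_nonpos (by linarith)]; ring
          have e5 : dist (F (x, u')) (F (x, T)) = T - u' := by
            rw [h1, abs_of_nonpos (by linarith)]; ring
          have e6 : dist (F (x, u')) (F (x', u)) = dist (F (x', u)) (F (x, u')) :=
            dist_comm _ _
          rw [e4, e5, e6] at e1
          rw [e5] at e2
          have e7 := dist_triangle (F (x', u)) (F (x, u')) (F (x, u))
          have e8 : dist (F (x, u')) (F (x, u)) = |u' - u| := h1 x u' u
          rw [e8] at e7
          have e7' : dist (F (x, u)) (F (x', u)) = dist (F (x', u)) (F (x, u)) :=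
            dist_comm _ _
          rcases abs_cases (u' - u) with ⟨e9, _⟩ | ⟨e9, _⟩ <;> linarith
      · obtain ⟨g, rfl⟩ := hy
        exact ⟨g, hdy.le⟩
    set t₀ := T - c₁ with ht₀def
    have htt₀ : t ≤ t₀ - 7*δ := by simp only [ht₀def]; linarith
    obtain ⟨B, hB⟩ := hget t (by simp only [ht₀def] at htt₀ ⊢; linarith)
    obtain ⟨A, hA⟩ := hget t₀ le_rfl
    obtain ⟨B', hB'⟩ := hget' t (by simp only [ht₀def] at htt₀ ⊢; linarith)
    obtain ⟨A', hA'⟩ := hget' t₀ le_rfl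
    set sb := t₀ - t with hsbdef
    have hsb7 : 7*δ ≤ sb := by simp only [hsbdef]; linarith
    -- parameter estimates
    have hBA : sb - 4*δ ≤ |B - A| ∧ |B - A| ≤ sb + 4*δ := by
      have d1 : dist (ρ B) (ρ A) = |B - A| := hρ B A
      have d2 : dist (F (x, t)) (F (x, t₀)) = sb := by
        rw [h1, abs_of_nonpos (by linarith)]; simp only [hsbdef]; ring
      have e1 := dist_triangle4 (ρ B) (F (x, t)) (F (x, t₀)) (ρ A)
      have e2 := dist_triangle4 (F (x, t)) (ρ B) (ρ A) (F (x, t₀))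
      rw [d1, d2] at e1 e2
      have e3 : dist (ρ B) (F (x, t)) = dist (F (x, t)) (ρ B) := dist_comm _ _
      have e4 : dist (ρ A) (F (x, t₀)) = dist (F (x, t₀)) (ρ A) := dist_comm _ _
      constructor <;> [skip; skip] <;> first
        | (rw [e3] at e1; linarith)
        | (rw [e4] at e2; linarith)
    have hBA' : sb - 4*δ ≤ |B' - A'| ∧ |B' - A'| ≤ sb + 4*δ := by
      have d1 : dist (ρ B') (ρ A') = |B' - A'| := hρ B' A'
      have d2 : dist (F (x', t)) (F (x', t₀)) = sb := by
        rw [h1, abs_of_nonpos (by linarith)]; simp only [hsbdef]; ring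
      have e1 := dist_triangle4 (ρ B') (F (x', t)) (F (x', t₀)) (ρ A')
      have e2 := dist_triangle4 (F (x', t)) (ρ B') (ρ A') (F (x', t₀))
      rw [d1, d2] at e1 e2
      have e3 : dist (ρ B') (F (x', t)) = dist (F (x', t)) (ρ B') := dist_comm _ _
      have e4 : dist (ρ A') (F (x', t₀)) = dist (F (x', t₀)) (ρ A') := dist_comm _ _
      constructor <;> first
        | (rw [e3] at e1; linarith)
        | (rw [e4] at e2; linarith)
    have hAA' : |A - A'| ≤ d₀ := by
      have d1 : dist (ρ A) (ρ A') = |A - A'| := hρ A A'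
      have e0 := dist_triangle4 (F (x, t₀)) (F (x, T)) (F (x', T)) (F (x', t₀))
      have e0a : dist (F (x, t₀)) (F (x, T)) = c₁ := by
        rw [h1, abs_of_nonpos (by simp only [ht₀def]; linarith)]; simp only [ht₀def]; ring
      have e0b : dist (F (x', T)) (F (x', t₀)) = c₁ := by
        rw [h1, abs_of_nonneg (by simp only [ht₀def]; linarith)]; simp only [ht₀def]; ring
      have e0c : dist (F (x, T)) (F (x', T)) ≤ R + 2 := hDtop x x' T ha le_rfl
      rw [e0a, e0b] at e0
      have e1 := dist_triangle4 (ρ A) (F (x, t₀)) (F (x', t₀)) (ρ A')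
      rw [d1] at e1
      have e2 : dist (ρ A) (F (x, t₀)) = dist (F (x, t₀)) (ρ A) := dist_comm _ _
      rw [e2] at e1
      simp only [hd₀def]
      linarith
    -- dichotomy
    rcases dichotomy hδ hsb7 hBA.1 hBA.2 hBA'.1 hBA'.2 hAA' with hbig | hsmall
    · have d1 : dist (ρ B) (ρ B') = |B - B'| := hρ B B'
      have e1 := dist_triangle4 (ρ B) (F (x, t)) (F (x', t)) (ρ B')
      rw [d1] at e1
      have e2 : dist (ρ B) (F (x, t)) = dist (F (x, t)) (ρ B) := dist_comm _ _
      rw [e2] at e1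
      simp only [hCKdef]
      have : T - t = sb + c₁ := by simp only [hsbdef, ht₀def]; ring
      linarith
    · exfalso
      have hDt : d₀ + 12*δ + 1 ≤ dist (F (x, t)) (F (x', t)) :=
        hc₃ x x' t ha (by linarith)
      have d1 : dist (ρ B) (ρ B') = |B - B'| := hρ B B'
      have e1 := dist_triangle4 (F (x, t)) (ρ B) (ρ B') (F (x', t))
      rw [d1] at e1
      have e2 : dist (ρ B') (F (x', t)) = dist (F (x', t)) (ρ B') := dist_comm _ _
      rw [e2] at e1
      linarith
  -- final constant
  have hlog2 : 0 ≤ Real.log 2 := Real.log_nonneg one_le_two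
  have hlogε2 : 0 ≤ Real.log (1 + ε^2/2) := Real.log_nonneg (by nlinarith)
  refine ⟨CK + (R+2) + (R+2) + (Real.log 2 + 2*|Real.log ε|) +
    (Real.log 2 + Real.log (1 + ε^2/2)), ?_⟩
  rintro ⟨x, s⟩ ⟨x', t⟩
  by_cases hxx : x = x'
  · subst hxx
    have hh : hypDist (x, s) (x, t) = |s - t| := by
      unfold hypDist
      simp only [dist_self]
      rw [cosh_arg_eq 0 s t]
      norm_num [arcosh_cosh]
    rw [hh, h1]
    simp only [sub_self, abs_zero]
    have := abs_nonneg (Real.log ε)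
    linarith
  · have ha : 0 < dist x x' := dist_pos.mpr hxx
    set T := Real.log (dist x x' / ε) with hTdef
    set M := max (max s t) T with hMdef
    have hsM : s ≤ M := le_trans (le_max_left s t) (le_max_left _ _)
    have htM : t ≤ M := le_trans (le_max_right s t) (le_max_left _ _)
    have hTM : T ≤ M := le_max_right _ _
    have haT : dist x x' = ε * Real.exp T := by
      rw [hTdef, Real.exp_log (div_pos ha hε)]; field_simp
    have keyT : ∀ u : ℝ, u ≤ T → 2*(T - u) - CK ≤ dist (F (x, u)) (F (x', u)) :=
      fun u hu => key x x' hxx u hu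
    have hDtopT : ∀ u : ℝ, T ≤ u → dist (F (x, u)) (F (x', u)) ≤ R + 2 :=
      fun u hu => hDtop x x' u ha hu
    clear_value T M
    -- upper bound on image distance
    have hub : dist (F (x, s)) (F (x', t)) ≤ ((M - s) + (M - t)) + (R + 2) := by
      have hmid : dist (F (x, M+1)) (F (x', M+1)) ≤ R := by
        apply h3
        rw [haT, show Real.exp (-(M+1)) * (ε * Real.exp T)
            = ε * Real.exp (T - (M+1)) by rw [Real.exp_sub, Real.exp_neg]; field_simp; try ring]
        have h9 : Real.exp (T - (M+1)) < 1 :=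
          Real.exp_lt_one_iff.mpr (by linarith)
        nlinarith
      have e1 := dist_triangle4 (F (x, s)) (F (x, M+1)) (F (x', M+1)) (F (x', t))
      rw [h1, h1] at e1
      have e2 : |s - (M+1)| = M + 1 - s := by rw [abs_of_nonpos (by linarith)]; ring
      have e3 : |M + 1 - t| = M + 1 - t := by rw [abs_of_nonneg (by linarith)]
      rw [e2, e3] at e1
      linarith
    -- lower bound on image distance
    have hlb : ((M - s) + (M - t)) - (CK + (R+2)) ≤ dist (F (x, s)) (F (x', t)) := by
      rcases le_total (max s t) T with hmt | hmt
      · have hM : M = T := by rw [hMdef]; exact max_eq_right hmt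
        rcases le_total s t with hst | hst
        · have hk := keyT s (le_trans (le_max_left s t) hmt)
          have e1 := dist_triangle (F (x, s)) (F (x', t)) (F (x', s))
          have e2 : dist (F (x', t)) (F (x', s)) = |t - s| := h1 x' t s
          rw [e2, abs_of_nonneg (by linarith)] at e1
          rw [hM]
          linarith
        · have hk := keyT t (le_trans (le_max_right s t) hmt)
          have e1 := dist_triangle (F (x, t)) (F (x, s)) (F (x', t))
          have e2 : dist (F (x, t)) (F (x, s)) = |t - s| := h1 x t s
          rw [e2, abs_of_nonpos (by linarith)] at e1
          rw [hM]
          linarith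
      · have hM : M = max s t := by rw [hMdef]; exact max_eq_left hmt
        rcases le_total s t with hst | hst
        · have hmax : max s t = t := max_eq_right hst
          have e1 := dist_triangle (F (x, s)) (F (x', t)) (F (x, t))
          have e2 : dist (F (x', t)) (F (x, t)) ≤ R + 2 := by
            rw [dist_comm]; exact hDtopT t (by rw [hmax] at hmt; exact hmt)
          have e3 : dist (F (x, s)) (F (x, t)) = t - s := by
            rw [h1, abs_of_nonpos (by linarith)]; ring
          rw [e3] at e1
          rw [hM, hmax]
          linarith [dist_nonneg (x := F (x, s)) (y := F (x', t)), hCKnn]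
        · have hmax : max s t = s := max_eq_left hst
          have e1 := dist_triangle (F (x', s)) (F (x, s)) (F (x', t))
          have e2 : dist (F (x', s)) (F (x, s)) ≤ R + 2 := by
            rw [dist_comm]; exact hDtopT s (by rw [hmax] at hmt; exact hmt)
          have e3 : dist (F (x', s)) (F (x', t)) = s - t := by
            rw [h1, abs_of_nonneg (by linarith)]
          have e4 : dist (F (x, s)) (F (x', t)) = dist (F (x', t)) (F (x, s)) := dist_comm _ _
          rw [e3] at e1
          rw [hM, hmax]
          have e5 := dist_triangle (F (x', s)) (F (x, s)) (F (x', t))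
          linarith [dist_nonneg (x := F (x, s)) (y := F (x', t)), hCKnn,
            dist_comm (F (x, s)) (F (x', t))]
    -- hyperbolic distance computation
    have hX : hypDist (x, s) (x', t)
        = arcosh (Real.cosh (s - t) + (dist x x')^2 / (2*Real.exp s*Real.exp t)) := by
      unfold hypDist
      rw [cosh_arg_eq]
    set Y := Real.cosh (s - t) + (dist x x')^2 / (2*Real.exp s*Real.exp t) with hYdef
    have hY1 : 1 ≤ Y := by
      have := Real.one_le_cosh (s - t)
      have hp : 0 ≤ (dist x x')^2 / (2*Real.exp s*Real.exp t) := by positivity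
      simp only [hYdef]; linarith
    set g := (M - s) + (M - t) with hgdef
    clear_value Y
    have hcosh_le : Real.cosh (s - t) ≤ Real.exp g := by
      rw [Real.cosh_eq]
      have e1 : Real.exp (s - t) ≤ Real.exp g := Real.exp_le_exp.mpr (by simp only [hgdef]; linarith)
      have e2 : Real.exp (-(s - t)) ≤ Real.exp g := Real.exp_le_exp.mpr (by simp only [hgdef]; linarith)
      linarith
    have hterm : (dist x x')^2 / (2*Real.exp s*Real.exp t) = (ε^2/2) * Real.exp (2*T - s - t) := by
      rw [haT]
      rw [show Real.exp (2*T - s - t) = Real.exp T * Real.exp T / (Real.exp s * Real.exp t) by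
        rw [← Real.exp_add, ← Real.exp_add, ← Real.exp_sub]; ring_nf]
      have h1' := (Real.exp_pos s).ne'
      have h2' := (Real.exp_pos t).ne'
      field_simp
    have hyup : hypDist (x, s) (x', t) ≤ g + (Real.log 2 + Real.log (1 + ε^2/2)) := by
      rw [hX]
      have hYle : Y ≤ (1 + ε^2/2) * Real.exp g := by
        simp only [hYdef]
        rw [hterm]
        have e1 : Real.exp (2*T - s - t) ≤ Real.exp g :=
          Real.exp_le_exp.mpr (by simp only [hgdef]; linarith)
        have e2 : (ε^2/2) * Real.exp (2*T - s - t) ≤ (ε^2/2) * Real.exp g :=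
          mul_le_mul_of_nonneg_left e1 (by positivity)
        have e3 : (1 + ε^2/2) * Real.exp g = Real.exp g + (ε^2/2) * Real.exp g := by ring
        rw [e3]
        linarith [hcosh_le]
      calc arcosh Y ≤ Real.log 2 + Real.log Y := arcosh_le_log hY1
        _ ≤ Real.log 2 + Real.log ((1 + ε^2/2) * Real.exp g) := by
            have := Real.log_le_log (by linarith) hYle
            linarith
        _ = Real.log 2 + (Real.log (1 + ε^2/2) + g) := by
            rw [Real.log_mul (by positivity) (Real.exp_pos g).ne', Real.log_exp]
        _ = g + (Real.log 2 + Real.log (1 + ε^2/2)) := by ring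
    have hylow : g - (Real.log 2 + 2*|Real.log ε|) ≤ hypDist (x, s) (x', t) := by
      rw [hX]
      have base : Real.log Y ≤ arcosh Y := log_le_arcosh hY1
      rcases le_total (max s t) T with hmt | hmt
      · -- M = T, use the horizontal term
        have hM : M = T := by rw [hMdef]; exact max_eq_right hmt
        have hYge : (ε^2/2) * Real.exp g ≤ Y := by
          simp only [hYdef]
          rw [hterm]
          have : 2*T - s - t = g := by simp only [hgdef, hM]; ring
          rw [this]
          have := Real.one_le_cosh (s - t)
          linarith
        have e1 : Real.log ((ε^2/2) * Real.exp g) ≤ Real.log Y :=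
          Real.log_le_log (by positivity) hYge
        rw [Real.log_mul (by positivity) (Real.exp_pos g).ne', Real.log_exp,
          Real.log_div (by positivity) (by norm_num), Real.log_pow] at e1
        have habs := neg_abs_le (Real.log ε)
        push_cast at e1
        linarith
      · -- M = max s t, use the cosh term
        have hM : M = max s t := by rw [hMdef]; exact max_eq_left hmt
        have hg : g = |s - t| := by
          simp only [hgdef, hM]
          rcases le_total s t with h | h
          · rw [max_eq_right h, abs_of_nonpos (by linarith)]; ring
          · rw [max_eq_left h, abs_of_nonneg (by linarith)]; ring
        have hYge : Real.exp |s - t| / 2 ≤ Y := by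
          simp only [hYdef]
          have hp : 0 ≤ (dist x x')^2 / (2*Real.exp s*Real.exp t) := by positivity
          have h2exp : Real.exp |s - t| ≤ Real.exp (s - t) + Real.exp (-(s - t)) := by
            rcases abs_cases (s - t) with ⟨h, _⟩ | ⟨h, _⟩ <;> rw [h] <;>
              linarith [Real.exp_pos (-(s - t)), Real.exp_pos (s - t)]
          have : Real.exp |s - t| / 2 ≤ Real.cosh (s - t) := by
            rw [Real.cosh_eq]; linarith
          linarith
        have e1 : Real.log (Real.exp |s - t| / 2) ≤ Real.log Y :=
          Real.log_le_log (by positivity) hYge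
        rw [Real.log_div (Real.exp_pos _).ne' (by norm_num), Real.log_exp] at e1
        have habs := abs_nonneg (Real.log ε)
        rw [hg]
        linarith
    rw [abs_le]
    constructor <;>
      linarith [abs_nonneg (Real.log ε), hlog2, hlogε2, hR.le, hCKnn]
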